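/- Let A. be a simplicial C*-algebra (a simplicial object in the category of C*-algebras, with face and degeneracy maps being *-homomorphisms). Then for every n ≥ 1, the combinatorial homotopy group π_n(A.) = A^n_n / ∂_{n+1}(A^n_{n+1}) vanishes, where A^k_m = ∩_{i=0}^{k} ker(∂_i : A_m → A_{m-1}). -/

import Mathlib

open scoped Pointwise


set_option maxHeartbeats 1000000 in
open Unitization in
/-- A star ring homomorphism (no linearity assumed) between C*-algebras is contractive. -/
lemma star_ring_hom_norm_le {B C : Type*} [NonUnitalCStarAlgebra B] [NonUnitalCStarAlgebra C]
    (f : B → C) (hadd : ∀ x y, f (x + y) = f x + f y)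
    (hmul : ∀ x y, f (x * y) = f x * f y) (hstar : ∀ x, f (star x) = star (f x)) :
    ∀ x, ‖f x‖ ≤ ‖x‖ := by
  set F : B →+ C := AddMonoidHom.mk' f hadd with hF
  have hf0 : f 0 = 0 := map_zero F
  -- selfadjoint bound
  have hsa : ∀ s : B, IsSelfAdjoint s → ‖f s‖ ≤ ‖s‖ := by
    intro s hs
    -- reduce to rational scaling
    rcases le_or_gt ‖f s‖ ‖s‖ with h | h
    · exact h
    exfalso
    obtain ⟨q, hq1, hq2⟩ := exists_rat_btwn h
    have hq0 : (0:ℝ) < q := lt_of_le_of_lt (norm_nonneg s) hq1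
    -- σ := q⁻¹ • s
    set σ : B := (q:ℝ)⁻¹ • s with hσdef
    have hσsa : IsSelfAdjoint σ := IsSelfAdjoint.smul (r := (q:ℝ)⁻¹) (star_trivial _) hs
    have hσnorm : ‖σ‖ < 1 := by
      rw [hσdef, norm_smul]
      rw [norm_inv, Real.norm_eq_abs, abs_of_pos hq0]
      rw [inv_mul_lt_iff₀ hq0, mul_one]
      exact hq1
    -- f s = q • f σ
    have hfs : f s = (q:ℝ) • f σ := by
      have h1 : s = ((q:ℚ):ℝ) • σ := by
        rw [hσdef, smul_inv_smul₀ (by exact_mod_cast hq0.ne')]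
      have := map_ratCast_smul F ℝ ℝ q σ
      rw [← h1] at this
      simpa [hF] using this
    -- spectrum of σ in [-1,1]
    have hspec : ∀ t ∈ quasispectrum ℝ σ, t ∈ Set.Icc (-1:ℝ) 1 := by
      intro t ht
      have : ‖t‖₊ ≤ ‖σ‖₊ := by
        have h0 := nnnorm_apply_le_nnnorm_cfcₙ (id : ℝ → ℝ) σ ht
        rwa [cfcₙ_id ℝ σ] at h0
      have h2 : |t| ≤ ‖σ‖ := by
        simpa [Real.norm_eq_abs] using (NNReal.coe_le_coe.mpr this)
      constructor <;> [linarith [abs_le.mp (h2.trans hσnorm.le) |>.1];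
        linarith [abs_le.mp (h2.trans hσnorm.le) |>.2]]
    -- τ := arcsin σ, u := sin τ, c := cos τ - 1
    set τ : B := cfcₙ Real.arcsin σ with hτdef
    have hτsa : IsSelfAdjoint τ := cfcₙ_predicate _ σ
    set u : B := cfcₙ Real.sin τ with hudef
    set c : B := cfcₙ (fun t => Real.cos t - 1) τ with hcdef
    have hu_sa : IsSelfAdjoint u := cfcₙ_predicate _ τ
    have hc_sa : IsSelfAdjoint c := cfcₙ_predicate _ τ
    have huσ : u = σ := by
      rw [hudef, hτdef, ← cfcₙ_comp Real.sin Real.arcsin σ (by fun_prop) (by simp)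
        (Real.continuous_arcsin.continuousOn) (by simp)]
      exact (cfcₙ_congr (g := fun t : ℝ => t)
        fun t ht => Real.sin_arcsin (hspec t ht).1 (hspec t ht).2).trans (cfcₙ_id' ℝ σ)
    -- trig identity: u * u + (c * c + (c + c)) = 0
    have htrig : u * u + (c * c + (c + c)) = 0 := by
      have h1 : u * u = cfcₙ (fun t => Real.sin t * Real.sin t) τ :=
        (cfcₙ_mul _ _ τ (by fun_prop) (by simp) (by fun_prop) (by simp)).symm
      have h2 : c * c = cfcₙ (fun t => (Real.cos t - 1) * (Real.cos t - 1)) τ :=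
        (cfcₙ_mul _ _ τ (by fun_prop) (by simp) (by fun_prop) (by simp)).symm
      have h3 : c + c = cfcₙ (fun t => (Real.cos t - 1) + (Real.cos t - 1)) τ :=
        (cfcₙ_add _ _ τ (by fun_prop) (by simp) (by fun_prop) (by simp)).symm
      rw [h1, h2, h3, ← cfcₙ_add _ _ τ (by fun_prop) (by simp) (by fun_prop) (by simp),
        ← cfcₙ_add _ _ τ (by fun_prop) (by simp) (by fun_prop) (by simp)]
      refine Eq.trans (cfcₙ_congr (g := fun _ : ℝ => (0:ℝ)) fun t _ => ?_)
        (cfcₙ_const_zero ℝ τ)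
      linear_combination Real.sin_sq_add_cos_sq t
    -- apply f
    have hkey : f u * f u + (f c * f c + (f c + f c)) = 0 := by
      rw [← hmul, ← hmul, ← hadd, ← hadd, ← hadd, htrig, hf0]
    -- pass to unitization
    set v : C := f u with hv
    set k : C := f c with hk
    have hv_sa : IsSelfAdjoint v := by
      show star v = v
      rw [hv, ← hstar, hu_sa.star_eq]
    have hk_sa : IsSelfAdjoint k := by
      show star k = k
      rw [hk, ← hstar, hc_sa.star_eq]
    set a : Unitization ℂ C := (v : Unitization ℂ C) with ha
    set b : Unitization ℂ C := 1 + (k : Unitization ℂ C) with hb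
    have hab : a * a = 1 - b * b := by
      have : (v * v : C) = -(k * k) - (k + k) := by
        have h0 := eq_neg_of_add_eq_zero_left hkey
        rw [neg_add] at h0
        simpa [sub_eq_add_neg] using h0
      rw [ha, hb]
      rw [← Unitization.inr_mul ℂ, this, Unitization.inr_sub ℂ, Unitization.inr_neg ℂ,
        Unitization.inr_add ℂ, Unitization.inr_mul ℂ]
      noncomm_ring
    have ha_sa : IsSelfAdjoint a := by
      rw [ha]; exact hv_sa.inr ℂ
    have hb_sa : IsSelfAdjoint b := by
      rw [hb]; exact (IsSelfAdjoint.one _).add (hk_sa.inr ℂ)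
    -- spectrum of a * a ⊆ [0, 1]
    have haa_sa : IsSelfAdjoint (a * a) := by
      have h0 : star a * a = a * a := by rw [ha_sa.star_eq]
      exact h0 ▸ IsSelfAdjoint.star_mul_self a
    have hspec_aa : ∀ t ∈ spectrum ℝ (a * a), t ∈ Set.Icc (0:ℝ) 1 := by
      intro t ht
      refine ⟨?_, ?_⟩
      · have := spectrum_star_mul_self_nonneg (b := a)
        rw [ha_sa.star_eq] at this
        exact this t ht
      · -- 1 - t ∈ spectrum of 1 - a*a = b*b
        have h1 : (1:ℝ) - t ∈ {(1:ℝ)} - spectrum ℝ (a * a) :=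
          Set.sub_mem_sub rfl ht
        rw [spectrum.singleton_sub_eq] at h1
        have halg : (algebraMap ℝ (Unitization ℂ C)) 1 - a * a = b * b := by
          rw [map_one, hab, sub_sub_cancel]
        rw [halg] at h1
        have := spectrum_star_mul_self_nonneg (b := b)
        rw [hb_sa.star_eq] at this
        linarith [this _ h1]
    -- norm bound
    have hnorm_aa : ‖a * a‖ ≤ 1 := by
      have : a * a = cfc (id : ℝ → ℝ) (a * a) := (cfc_id ℝ (a*a)).symm
      rw [this]
      refine norm_cfc_le zero_le_one fun t ht => ?_
      have hh := hspec_aa t ht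
      simp only [id_eq, Real.norm_eq_abs, abs_le]
      exact ⟨by linarith [hh.1], hh.2⟩
    have hvnorm : ‖v‖ ≤ 1 := by
      have h1 : ‖v * v‖ = ‖v‖ * ‖v‖ := by
        have h0 := CStarRing.norm_star_mul_self (x := v)
        rwa [hv_sa.star_eq] at h0
      have h2 : ‖(v * v : C)‖ = ‖a * a‖ := by
        rw [ha, ← Unitization.inr_mul ℂ, Unitization.norm_inr]
      nlinarith [norm_nonneg v, h1, h2, hnorm_aa]
    -- conclude
    have : ‖f s‖ ≤ q := by
      rw [hfs, norm_smul, Real.norm_eq_abs, abs_of_pos hq0]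
      calc (q:ℝ) * ‖f σ‖ ≤ q * 1 := by
            apply mul_le_mul_of_nonneg_left _ hq0.le
            rw [← huσ] at *; exact hvnorm
        _ = q := mul_one _
    linarith
  -- general case
  intro x
  have h1 : ‖f x‖ * ‖f x‖ = ‖f (star x * x)‖ := by
    rw [hmul, hstar, CStarRing.norm_star_mul_self]
  have h2 : ‖f (star x * x)‖ ≤ ‖star x * x‖ := hsa _ (IsSelfAdjoint.star_mul_self x)
  have h3 : ‖star x * x‖ = ‖x‖ * ‖x‖ := CStarRing.norm_star_mul_self
  nlinarith [norm_nonneg (f x), norm_nonneg x]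


lemma sa_decomp {B C : Type*} [NonUnitalCStarAlgebra B] [NonUnitalCStarAlgebra C]
    (N : ℕ) (g : ℕ → B →⋆ₙₐ[ℝ] C) (hg : ∀ i, Continuous (g i))
    (h : B) (hsa : IsSelfAdjoint h) (hh : ∀ i ≤ N, g i h = 0) :
    ∃ a b : B, IsSelfAdjoint a ∧ IsSelfAdjoint b ∧ (∀ i ≤ N, g i a = 0) ∧
      (∀ i ≤ N, g i b = 0) ∧ a * a - b * b = h := by
  have hf : Continuous (fun t : ℝ => Real.sqrt (max t 0)) :=
    Real.continuous_sqrt.comp (continuous_id.max continuous_const)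
  have hgc : Continuous (fun t : ℝ => Real.sqrt (max (-t) 0)) :=
    Real.continuous_sqrt.comp (continuous_neg.max continuous_const)
  refine ⟨cfcₙ (fun t : ℝ => Real.sqrt (max t 0)) h,
          cfcₙ (fun t : ℝ => Real.sqrt (max (-t) 0)) h,
          cfcₙ_predicate _ h, cfcₙ_predicate _ h, ?_, ?_, ?_⟩
  · intro i hi
    rw [NonUnitalStarAlgHom.map_cfcₙ (g i) _ h (by fun_prop) (by simp) (hg i) hsa
      (by rw [hh i hi]; exact .zero _), hh i hi]
    exact cfcₙ_apply_zero
  · intro i hi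
    rw [NonUnitalStarAlgHom.map_cfcₙ (g i) _ h (by fun_prop) (by simp) (hg i) hsa
      (by rw [hh i hi]; exact .zero _), hh i hi]
    exact cfcₙ_apply_zero
  · rw [← cfcₙ_mul _ _ h (by fun_prop) (by simp) (by fun_prop) (by simp),
      ← cfcₙ_mul _ _ h (by fun_prop) (by simp) (by fun_prop) (by simp),
      ← cfcₙ_sub _ _ h (by fun_prop) (by simp) (by fun_prop) (by simp)]
    have : (fun t : ℝ => Real.sqrt (max t 0) * Real.sqrt (max t 0)
        - Real.sqrt (max (-t) 0) * Real.sqrt (max (-t) 0)) = fun t : ℝ => t := by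
      funext t
      rw [Real.mul_self_sqrt (le_max_right _ _), Real.mul_self_sqrt (le_max_right _ _)]
      rcases le_total t 0 with ht | ht
      · rw [max_eq_right ht, max_eq_left (by linarith)]; ring
      · rw [max_eq_left ht, max_eq_right (by linarith)]; ring
    rw [this, cfcₙ_id' ℝ h]

lemma grand {B C : Type*} [NonUnitalCStarAlgebra B] [NonUnitalCStarAlgebra C] (N : ℕ)
    (dd : ℕ → B → C)
    (hdadd : ∀ i x y, dd i (x + y) = dd i x + dd i y)
    (hdmul : ∀ i x y, dd i (x * y) = dd i x * dd i y)
    (hdstar : ∀ i x, dd i (star x) = star (dd i x))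
    (J : B → B)
    (hJadd : ∀ x y, J (x + y) = J x + J y)
    (hJmul : ∀ x y, J (x * y) = J x * y)
    (hJstar : ∀ x, star (J x) = - J (star x))
    (hJJ : ∀ x, J (J x) = - x)
    (hJd : ∀ i x, dd i x = 0 → dd i (J x) = 0)
    (x : B) (hx : ∀ i ≤ N, dd i x = 0) :
    ∃ a b c₁ c₂ e₁ e₂ : B,
      (∀ i ≤ N, dd i a = 0) ∧ (∀ i ≤ N, dd i b = 0) ∧
      (∀ i ≤ N, dd i c₁ = 0) ∧ (∀ i ≤ N, dd i c₂ = 0) ∧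
      (∀ i ≤ N, dd i e₁ = 0) ∧ (∀ i ≤ N, dd i e₂ = 0) ∧
      a * a - b * b + (c₁ * c₂ - e₁ * e₂) = x := by
  -- bundle the maps as ℝ-star-algebra homs
  have hcont : ∀ i, Continuous (dd i) := by
    intro i
    exact AddMonoidHomClass.continuous_of_bound (AddMonoidHom.mk' (dd i) (hdadd i)) 1
      (fun z => by
        simpa using star_ring_hom_norm_le (dd i) (hdadd i) (hdmul i) (hdstar i) z)
  let G : ℕ → B →⋆ₙₐ[ℝ] C := fun i =>
    { toFun := dd i
      map_add' := hdadd i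
      map_zero' := map_zero (AddMonoidHom.mk' (dd i) (hdadd i))
      map_mul' := hdmul i
      map_star' := hdstar i
      map_smul' := map_real_smul (AddMonoidHom.mk' (dd i) (hdadd i)) (hcont i) }
  have hGdd : ∀ i z, G i z = dd i z := fun _ _ => rfl
  -- the J map as an additive hom
  let JF : B →+ B := AddMonoidHom.mk' J hJadd
  have hJdd : ∀ z, JF z = J z := fun _ => rfl
  -- real and imaginary-type parts
  set u : B := (2:ℝ)⁻¹ • (x + star x) with hu
  have hu_sa : IsSelfAdjoint u := by
    show star u = u
    rw [hu, star_smul, star_trivial, star_add, star_star, add_comm]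
  have hu_mem : ∀ i ≤ N, dd i u = 0 := by
    intro i hi
    rw [← hGdd, hu, map_smul, map_add, map_star]
    show (2:ℝ)⁻¹ • (dd i x + star (dd i x)) = 0
    rw [hx i hi, star_zero, add_zero, smul_zero]
  set w : B := x - u with hw
  have hw_mem : ∀ i ≤ N, dd i w = 0 := by
    intro i hi
    rw [← hGdd, hw, map_sub]
    show dd i x - dd i u = 0
    rw [hx i hi, hu_mem i hi, sub_zero]
  have hw_anti : star w = -w := by
    rw [hw, star_sub, hu_sa.star_eq]
    have h2 : star x - u - (u - x)= (x + star x) - (2:ℝ) • u := by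
      rw [two_smul]; abel
    have h2' : (2:ℝ) • u = x + star x := by
      rw [hu, smul_inv_smul₀ (two_ne_zero)]
    have := h2' ▸ h2
    rw [sub_eq_iff_eq_add]
    rw [neg_sub]
    rw [sub_eq_iff_eq_add] at this
    simp only [sub_self, zero_add] at this ⊢
    linear_combination (norm := abel1) this
  set h₂ : B := J w with hh₂
  have hh₂_sa : IsSelfAdjoint h₂ := by
    show star h₂ = h₂
    rw [hh₂, hJstar, hw_anti, ← hJdd, map_neg, hJdd, neg_neg]
  have hh₂_mem : ∀ i ≤ N, dd i h₂ = 0 := fun i hi => hJd i w (hw_mem i hi)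
  -- decompose u and h₂
  obtain ⟨a, b, ha_sa, hb_sa, ha_mem, hb_mem, hab⟩ :=
    sa_decomp N G (fun i => hcont i) u hu_sa (fun i hi => hu_mem i hi)
  obtain ⟨c, e, hc_sa, he_sa, hc_mem, he_mem, hce⟩ :=
    sa_decomp N G (fun i => hcont i) h₂ hh₂_sa (fun i hi => hh₂_mem i hi)
  refine ⟨a, b, J e, e, J c, c, ha_mem, hb_mem,
    fun i hi => hJd i e (he_mem i hi), he_mem,
    fun i hi => hJd i c (hc_mem i hi), hc_mem, ?_⟩
  have hwJ : w = J e * e - J c * c := by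
    have h3 : J h₂ = -w := by rw [hh₂, hJJ]
    have h4 : J (c * c - e * e) = -w := by rw [hce]; exact h3
    rw [← hJdd, map_sub, hJdd, hJdd, hJmul, hJmul] at h4
    have := congrArg Neg.neg h4
    rw [neg_sub, neg_neg] at this
    rw [← this]
  rw [hab, ← hwJ, hw]
  abel

/-- Let `A.` be a simplicial C*-algebra: C*-algebras `A n` with
face maps `d n i : A (n+1) →⋆ₙₐ[ℂ] A n` and degeneracies
`s n j : A n →⋆ₙₐ[ℂ] A (n+1)` (star ℂ-algebra homomorphisms) satisfying the
simplicial identities.  Then for every `n = m + 1 ≥ 1` the combinatorial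
homotopy group `π_n(A.) = A^n_n / ∂_{n+1}(A^n_{n+1})` vanishes, i.e. the map
`∂_{n+1} : A^n_{n+1} → A^n_n` is surjective, where
`A^k_m = ∩_{i=0}^{k} ker(∂_i : A_m → A_{m-1})`. -/
theorem statement2
    (A : ℕ → Type*) [∀ n, NonUnitalCStarAlgebra (A n)]
    [∀ n, NormedSpace ℂ (A n)] [∀ n, IsScalarTower ℂ (A n) (A n)]
    [∀ n, SMulCommClass ℂ (A n) (A n)] [∀ n, StarModule ℂ (A n)]
    (d : ∀ n, ℕ → (A (n + 1) →⋆ₙₐ[ℂ] A n))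
    (s : ∀ n, ℕ → (A n →⋆ₙₐ[ℂ] A (n + 1)))
    -- simplicial identities
    (hdd : ∀ n, ∀ i j : ℕ, i < j → j ≤ n + 2 →
      ∀ x : A (n + 2), d n i (d (n + 1) j x) = d n (j - 1) (d (n + 1) i x))
    (hds_lt : ∀ n, ∀ i j : ℕ, i < j → j ≤ n + 1 →
      ∀ x : A (n + 1), d (n + 1) i (s (n + 1) j x) = s n (j - 1) (d n i x))
    (hds_eq : ∀ n, ∀ j : ℕ, j ≤ n → ∀ x : A n, d n j (s n j x) = x)
    (hds_eq' : ∀ n, ∀ j : ℕ, j ≤ n → ∀ x : A n, d n (j + 1) (s n j x) = x)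
    (hds_gt : ∀ n, ∀ i j : ℕ, j + 1 < i → i ≤ n + 2 →
      ∀ x : A (n + 1), d (n + 1) i (s (n + 1) j x) = s n j (d n (i - 1) x))
    (hss : ∀ n, ∀ i j : ℕ, i ≤ j → j ≤ n →
      ∀ x : A n, s (n + 1) i (s n j x) = s (n + 1) (j + 1) (s n i x))
    -- `n = m + 1 ≥ 1`
    (m : ℕ) :
    ∀ x : A (m + 1), (∀ i ≤ m + 1, d m i x = 0) →
      ∃ y : A (m + 2), (∀ i ≤ m + 1, d (m + 1) i y = 0) ∧ d (m + 1) (m + 2) y = x := by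
  intro x hx
  classical
  -- decompose `x` into a combination of products of elements of `∩ ker (d m i)`
  obtain ⟨a, b, c₁, c₂, e₁, e₂, ha, hb, hc₁, hc₂, he₁, he₂, hsum⟩ :=
    grand (B := A (m + 1)) (C := A m) (m + 1)
      (fun i z => d m i z)
      (fun i y z => map_add (d m i) y z)
      (fun i y z => map_mul (d m i) y z)
      (fun i z => map_star (d m i) z)
      (fun z => Complex.I • z)
      (fun y z => smul_add Complex.I y z)
      (fun y z => (smul_mul_assoc Complex.I y z).symm)
      (fun z => by rw [star_smul, Complex.star_def, Complex.conj_I, neg_smul])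
      (fun z => by
        show Complex.I • Complex.I • z = -z
        rw [smul_smul, Complex.I_mul_I, neg_one_smul])
      (fun i z hz => by
        show d m i (Complex.I • z) = 0
        rw [map_smul, show d m i z = 0 from hz, smul_zero])
      x hx
  -- degeneracy-based construction
  set P : A (m + 1) →⋆ₙₐ[ℂ] A (m + 2) := s (m + 1) (m + 1) with hP
  set Q : A (m + 1) →⋆ₙₐ[ℂ] A (m + 2) := s (m + 1) m with hQ
  let w : A (m + 1) → A (m + 1) → A (m + 2) := fun u v => P u * P v - P u * Q v
  have hP_lt : ∀ i ≤ m, ∀ u : A (m + 1), (∀ i ≤ m + 1, d m i u = 0) →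
      d (m + 1) i (P u) = 0 := by
    intro i hi u hu
    rw [hP, hds_lt m i (m + 1) (Nat.lt_succ_of_le hi) le_rfl u]
    simp [hu i (le_trans hi (Nat.le_succ m))]
  have hP_eq : ∀ u : A (m + 1), d (m + 1) (m + 1) (P u) = u :=
    fun u => hds_eq (m + 1) (m + 1) le_rfl u
  have hP_eq' : ∀ u : A (m + 1), d (m + 1) (m + 2) (P u) = u :=
    fun u => hds_eq' (m + 1) (m + 1) le_rfl u
  have hQ_eq : ∀ v : A (m + 1), d (m + 1) (m + 1) (Q v) = v :=
    fun v => hds_eq' (m + 1) m (Nat.le_succ m) v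
  have hQ_gt : ∀ v : A (m + 1), (∀ i ≤ m + 1, d m i v = 0) →
      d (m + 1) (m + 2) (Q v) = 0 := by
    intro v hv
    rw [hQ, hds_gt m (m + 2) m (by omega) le_rfl v]
    have h21 : m + 2 - 1 = m + 1 := rfl
    rw [h21, hv (m + 1) le_rfl, map_zero]
  have hw_face : ∀ u v : A (m + 1), (∀ i ≤ m + 1, d m i u = 0) →
      (∀ i ≤ m + 1, d m i v = 0) → ∀ i ≤ m + 1, d (m + 1) i (w u v) = 0 := by
    intro u v hu hv i hi
    simp only [w, map_sub, map_mul]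
    rcases Nat.lt_or_ge i (m + 1) with h | h
    · rw [hP_lt i (Nat.lt_succ_iff.mp h) u hu, zero_mul, zero_mul, sub_zero]
    · have hi' : i = m + 1 := le_antisymm hi h
      subst hi'
      rw [hP_eq u, hP_eq v, hQ_eq v, sub_self]
  have hw_top : ∀ u v : A (m + 1), (∀ i ≤ m + 1, d m i v = 0) →
      d (m + 1) (m + 2) (w u v) = u * v := by
    intro u v hv
    simp only [w, map_sub, map_mul, hP_eq', hQ_gt v hv, mul_zero, sub_zero]
  refine ⟨w a a - w b b + (w c₁ c₂ - w e₁ e₂), ?_, ?_⟩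
  · intro i hi
    rw [map_add, map_sub (d (m + 1) i) (w a a) (w b b),
      map_sub (d (m + 1) i) (w c₁ c₂) (w e₁ e₂),
      hw_face a a ha ha i hi, hw_face b b hb hb i hi,
      hw_face c₁ c₂ hc₁ hc₂ i hi, hw_face e₁ e₂ he₁ he₂ i hi]
    simp
  · rw [map_add, map_sub (d (m + 1) (m + 2)) (w a a) (w b b),
      map_sub (d (m + 1) (m + 2)) (w c₁ c₂) (w e₁ e₂),
      hw_top a a ha, hw_top b b hb, hw_top c₁ c₂ hc₂, hw_top e₁ e₂ he₂]
    exact hsum
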